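/- Let K be a relatively weakly compact subset of a Banach space X, let (x_n) be a sequence in K, and let LIM be a Banach limit. Then the element of X** defined by x* ↦ LIM_n(x*(x_n)) lies in (the canonical image of) the intersection over all i of the norm-closed convex hulls of {x_i, x_{i+1}, ...}. -/

import Mathlib

noncomputable section
open Filter

/-- A Banach limit: positive, shift-invariant, normalized linear functional on
bounded sequences, extending the usual limit. -/
structure BanachLimit where
  toFun : BoundedContinuousFunction ℕ ℝ → ℝ
  map_add' : ∀ f g, toFun (f + g) = toFun f + toFun g
  map_smul' : ∀ (c : ℝ) f, toFun (c • f) = c * toFun f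
  pos' : ∀ f, (∀ n, 0 ≤ f n) → 0 ≤ toFun f
  shift' : ∀ f : BoundedContinuousFunction ℕ ℝ,
    toFun (f.compContinuous ⟨fun n => n + 1, continuous_of_discreteTopology⟩) = toFun f
  one' : toFun 1 = 1
  lim' : ∀ (f : BoundedContinuousFunction ℕ ℝ) (a : ℝ),
    Tendsto (fun n => f n) atTop (nhds a) → toFun f = a

/-- The bounded continuous function on `ℕ` associated with a bounded sequence. -/
def bseq (f : ℕ → ℝ) (h : ∃ C, ∀ n, |f n| ≤ C) : BoundedContinuousFunction ℕ ℝ :=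
  ⟨⟨f, continuous_of_discreteTopology⟩, by
    obtain ⟨C, hC⟩ := h
    exact ⟨C + C, fun x y => by
      rw [Real.dist_eq]
      exact (abs_sub _ _).trans (add_le_add (hC x) (hC y))⟩⟩

@[simp] lemma bseq_apply (f : ℕ → ℝ) (h) (n : ℕ) : bseq f h n = f n := rfl

lemma eq_of_abs_sub_le_all' (a b : ℝ) (h : ∀ ε > 0, |a - b| ≤ ε) : a = b := by
  by_contra hne
  have h1 : 0 < |a - b| := abs_pos.mpr (sub_ne_zero.mpr hne)
  have := h (|a - b| / 2) (by linarith)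
  linarith

namespace BanachLimit
variable (L : BanachLimit)

lemma map_zero : L.toFun 0 = 0 := by
  have := L.map_smul' 0 0
  simpa using this

lemma map_neg (f : BoundedContinuousFunction ℕ ℝ) : L.toFun (-f) = - L.toFun f := by
  have h := L.map_smul' (-1) f
  rw [neg_one_smul ℝ f] at h
  rw [h]; ring

lemma map_sub (f g : BoundedContinuousFunction ℕ ℝ) :
    L.toFun (f - g) = L.toFun f - L.toFun g := by
  have := L.map_add' f (-g)
  rw [L.map_neg] at this
  simpa [sub_eq_add_neg] using this

lemma map_sum {ι : Type*} (s : Finset ι) (f : ι → BoundedContinuousFunction ℕ ℝ) :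
    L.toFun (∑ i ∈ s, f i) = ∑ i ∈ s, L.toFun (f i) := by
  classical
  induction s using Finset.induction_on with
  | empty => simpa using L.map_zero
  | insert a s hni ih =>
      rw [Finset.sum_insert hni, Finset.sum_insert hni, L.map_add', ih]

lemma mono {f g : BoundedContinuousFunction ℕ ℝ} (h : ∀ n, f n ≤ g n) :
    L.toFun f ≤ L.toFun g := by
  have h0 : (0:ℝ) ≤ L.toFun (g - f) := L.pos' _ (fun n => by
    simp only [BoundedContinuousFunction.coe_sub, Pi.sub_apply]; linarith [h n])
  rw [L.map_sub] at h0
  linarith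

lemma abs_le {f : BoundedContinuousFunction ℕ ℝ} {C : ℝ} (h : ∀ n, |f n| ≤ C) :
    |L.toFun f| ≤ C := by
  have h1 : L.toFun f ≤ C := by
    have := L.mono (g := C • (1 : BoundedContinuousFunction ℕ ℝ)) (f := f) (fun n => by
      simpa using (_root_.abs_le.mp (h n)).2)
    rwa [L.map_smul', L.one', mul_one] at this
  have h2 : -C ≤ L.toFun f := by
    have := L.mono (f := (-C) • (1 : BoundedContinuousFunction ℕ ℝ)) (g := f) (fun n => by
      simpa using (_root_.abs_le.mp (h n)).1)
    rwa [L.map_smul', L.one', mul_one] at this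
  exact _root_.abs_le.mpr ⟨h2, h1⟩

lemma map_shift (f : ℕ → ℝ) (hb : ∃ C, ∀ n, |f n| ≤ C) (hb' : ∃ C, ∀ n, |f (n+1)| ≤ C) :
    L.toFun (bseq (fun n => f (n + 1)) hb') = L.toFun (bseq f hb) := by
  have : bseq (fun n => f (n + 1)) hb'
      = (bseq f hb).compContinuous ⟨fun n => n + 1, continuous_of_discreteTopology⟩ := by
    ext n; rfl
  rw [this, L.shift' (bseq f hb)]

lemma map_shift_iter (f : ℕ → ℝ) (i : ℕ) (hb : ∃ C, ∀ n, |f n| ≤ C)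
    (hb' : ∃ C, ∀ n, |f (n + i)| ≤ C) :
    L.toFun (bseq (fun n => f (n + i)) hb') = L.toFun (bseq f hb) := by
  obtain ⟨C, hC⟩ := hb
  induction i with
  | zero => rfl
  | succ i ih =>
      have hbi : ∃ C, ∀ n, |f (n + i)| ≤ C := ⟨C, fun n => hC _⟩
      have h1 : (fun n => f (n + (i+1))) = fun n => (fun m => f (m + i)) (n + 1) := by
        funext n; congr 1; omega
      have hbs : ∃ C, ∀ n, |(fun m => f (m + i)) (n + 1)| ≤ C := ⟨C, fun n => hC _⟩
      calc L.toFun (bseq (fun n => f (n + (i+1))) hb')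
          = L.toFun (bseq (fun n => (fun m => f (m + i)) (n+1)) hbs) := by
            congr 1; exact BoundedContinuousFunction.ext (fun n => by simp [h1])
        _ = L.toFun (bseq (fun m => f (m + i)) hbi) := L.map_shift _ hbi hbs
        _ = L.toFun (bseq f ⟨C, hC⟩) := ih hbi

lemma map_const (c : ℝ) (hb : ∃ C, ∀ n, |(fun _ : ℕ => c) n| ≤ C) :
    L.toFun (bseq (fun _ => c) hb) = c := by
  have : bseq (fun _ => c) hb = c • (1 : BoundedContinuousFunction ℕ ℝ) := by
    ext n; simp
  rw [this, L.map_smul', L.one', mul_one]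

end BanachLimit

lemma exists_unique_partial_sum (w : ℕ → ℝ) (s : Finset ℕ) :
    ∀ τ : ℝ, (∀ i ∈ s, 0 ≤ w i) → 0 ≤ τ → τ < (∑ i ∈ s, w i) →
    ∃! c, c ∈ s ∧ (∑ i ∈ s.filter (· < c), w i) ≤ τ ∧
      τ < (∑ i ∈ s.filter (· < c), w i) + w c := by
  classical
  induction s using Finset.induction_on_max with
  | empty =>
      intro τ _ h0 hτ
      simp only [Finset.sum_empty] at hτ; exact absurd hτ (by linarith)
  | insert b s hbs ih =>
      intro τ hw h0 hτ
      have hbnotin : b ∉ s := fun h => lt_irrefl b (hbs b h)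
      have hfil : ∀ c' ∈ s, (insert b s).filter (· < c') = s.filter (· < c') := by
        intro c' hc's
        rw [Finset.filter_insert]
        have : ¬ (b < c') := by have := hbs c' hc's; omega
        simp [this]
      have hfilb : (insert b s).filter (· < b) = s := by
        apply Finset.ext; intro a
        simp only [Finset.mem_filter, Finset.mem_insert]
        constructor
        · rintro ⟨rfl | ha, hlt⟩; · omega
          · exact ha
        · intro ha; exact ⟨Or.inr ha, hbs a ha⟩
      by_cases hcase : τ < ∑ i ∈ s, w i
      · obtain ⟨c, ⟨hcs, hc1, hc2⟩, hcu⟩ := ih τ (fun i hi => hw i (Finset.mem_insert_of_mem hi))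
          h0 hcase
        refine ⟨c, ⟨Finset.mem_insert_of_mem hcs, by rwa [hfil c hcs], by rwa [hfil c hcs]⟩, ?_⟩
        rintro c' ⟨hc's, hc'1, hc'2⟩
        rcases Finset.mem_insert.mp hc's with rfl | hc's
        · exfalso
          rw [hfilb] at hc'1
          linarith
        · exact hcu c' ⟨hc's, by rwa [hfil c' hc's] at hc'1, by rwa [hfil c' hc's] at hc'2⟩
      · push_neg at hcase
        refine ⟨b, ⟨Finset.mem_insert_self b s, by rwa [hfilb], ?_⟩, ?_⟩
        · rw [hfilb]
          rwa [Finset.sum_insert hbnotin, add_comm] at hτ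
        · rintro c' ⟨hc's, hc'1, hc'2⟩
          rcases Finset.mem_insert.mp hc's with rfl | hc's
          · rfl
          · exfalso
            have hc'notin : c' ∉ (insert b s).filter (· < c') := by
              simp [Finset.mem_filter]
            have hins : (∑ i ∈ (insert b s).filter (· < c'), w i) + w c'
                = ∑ i ∈ insert c' ((insert b s).filter (· < c')), w i := by
              rw [Finset.sum_insert hc'notin, add_comm]
            rw [hins] at hc'2
            have hsub : insert c' ((insert b s).filter (· < c')) ⊆ s := by
              intro a ha
              rcases Finset.mem_insert.mp ha with rfl | ha
              · exact hc's
              · have := Finset.mem_filter.mp ha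
                rcases Finset.mem_insert.mp this.1 with hab | has
                · exfalso; have h5 := hbs c' hc's; have h6 := this.2; omega
                · exact has
            have hle : ∑ i ∈ insert c' ((insert b s).filter (· < c')), w i ≤ ∑ i ∈ s, w i := by
              apply Finset.sum_le_sum_of_subset_of_nonneg hsub
              intro i hi _
              exact hw i (Finset.mem_insert_of_mem hi)
            linarith

lemma Int.floor_half_eq (c : ℝ) : ⌊c / 2⌋ = ⌊c⌋ / 2 := by
  have h2 : (0:ℤ) ≤ ⌊c⌋ % 2 := Int.emod_nonneg _ (by norm_num)
  have h3 : ⌊c⌋ % 2 < 2 := Int.emod_lt_of_pos _ (by norm_num)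
  have h1 : (2:ℤ) * (⌊c⌋ / 2) + ⌊c⌋ % 2 = ⌊c⌋ := Int.mul_ediv_add_emod _ _
  have hfl : (⌊c⌋ : ℝ) ≤ c := Int.floor_le c
  have hfl2 : c < (⌊c⌋ : ℝ) + 1 := Int.lt_floor_add_one c
  have hle : ((2 * (⌊c⌋ / 2) : ℤ) : ℝ) ≤ (⌊c⌋ : ℝ) := by
    exact_mod_cast (by omega : (2 * (⌊c⌋/2) : ℤ) ≤ ⌊c⌋)
  have hlt : ((⌊c⌋ : ℤ) : ℝ) ≤ ((2 * (⌊c⌋ / 2) + 1 : ℤ) : ℝ) := by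
    exact_mod_cast (by omega : (⌊c⌋ : ℤ) ≤ 2*(⌊c⌋/2)+1)
  rw [Int.floor_eq_iff]
  constructor
  · push_cast at hle ⊢; linarith
  · push_cast at hlt ⊢; linarith

lemma abs_sub_lt_one_of_floor_eq {a b : ℝ} (h : ⌊a⌋ = ⌊b⌋) : |a - b| < 1 := by
  have ha1 : (⌊a⌋ : ℝ) ≤ a := Int.floor_le a
  have ha2 : a < (⌊a⌋ : ℝ) + 1 := Int.lt_floor_add_one a
  have hb1 : (⌊b⌋ : ℝ) ≤ b := Int.floor_le b
  have hb2 : b < (⌊b⌋ : ℝ) + 1 := Int.lt_floor_add_one b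
  rw [h] at ha1 ha2
  rw [abs_sub_lt_iff]
  constructor <;> linarith

section Core
open TopologicalSpace Set

variable {X : Type*} [NormedAddCommGroup X] [NormedSpace ℝ X]
variable (x : ℕ → X) (φf : ℕ → StrongDual ℝ X)

def eqv (k n m : ℕ) : Prop :=
  ∀ r < k, ⌊(2:ℝ)^k * φf r (x n)⌋ = ⌊(2:ℝ)^k * φf r (x m)⌋

lemma eqv_refl (k n : ℕ) : eqv x φf k n n := fun _ _ => rfl
lemma eqv_symm {k n m : ℕ} (h : eqv x φf k n m) : eqv x φf k m n := fun r hr => (h r hr).symm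
lemma eqv_trans {k n m p : ℕ} (h1 : eqv x φf k n m) (h2 : eqv x φf k m p) : eqv x φf k n p :=
  fun r hr => (h1 r hr).trans (h2 r hr)

lemma eqv_of_succ {k n m : ℕ} (h : eqv x φf (k+1) n m) : eqv x φf k n m := by
  intro r hr
  have h2 : ∀ p : ℕ, (2:ℝ)^k * φf r (x p) = ((2:ℝ)^(k+1) * φf r (x p)) / 2 := by
    intro p; rw [pow_succ]; ring
  rw [h2 n, h2 m, Int.floor_half_eq, Int.floor_half_eq, h r (by omega)]

lemma dist_lt_of_eqv {k n m : ℕ} (h : eqv x φf k n m) {r : ℕ} (hr : r < k) :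
    |φf r (x n) - φf r (x m)| < ((2:ℝ)^k)⁻¹ := by
  have hp : (0:ℝ) < 2^k := by positivity
  have h1 : |(2:ℝ)^k * φf r (x n) - (2:ℝ)^k * φf r (x m)| < 1 :=
    abs_sub_lt_one_of_floor_eq (h r hr)
  have h2 : |φf r (x n) - φf r (x m)| * (2:ℝ)^k < 1 := by
    rw [mul_comm, ← abs_of_pos hp, ← abs_mul, mul_sub]
    exact h1
  rw [← one_div]
  exact (lt_div_iff₀ hp).mpr h2

def cellf (k n : ℕ) : ℕ :=
  @Nat.find (fun m => eqv x φf k n m) (Classical.decPred _) ⟨n, eqv_refl x φf k n⟩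

lemma cellf_spec (k n : ℕ) : eqv x φf k n (cellf x φf k n) :=
  @Nat.find_spec (fun m => eqv x φf k n m) (Classical.decPred _) ⟨n, eqv_refl x φf k n⟩

lemma cellf_min {k n m : ℕ} (h : eqv x φf k n m) : cellf x φf k n ≤ m :=
  @Nat.find_min' (fun m => eqv x φf k n m) (Classical.decPred _) ⟨n, eqv_refl x φf k n⟩ m h

lemma cellf_eq_of_eqv {k n m : ℕ} (h : eqv x φf k n m) :
    cellf x φf k n = cellf x φf k m := by
  apply le_antisymm
  · exact cellf_min x φf (eqv_trans x φf h (cellf_spec x φf k m))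
  · exact cellf_min x φf (eqv_trans x φf (eqv_symm x φf h) (cellf_spec x φf k n))

lemma cellf_idem (k n : ℕ) : cellf x φf k (cellf x φf k n) = cellf x φf k n :=
  (cellf_eq_of_eqv x φf (cellf_spec x φf k n)).symm

lemma eqv_of_cellf_eq {k n m : ℕ} (h : cellf x φf k n = cellf x φf k m) :
    eqv x φf k n m := by
  have h1 := cellf_spec x φf k n
  have h2 := cellf_spec x φf k m
  rw [h] at h1
  exact eqv_trans x φf h1 (eqv_symm x φf h2)

lemma cellf_succ_eq {k n m : ℕ} (h : cellf x φf (k+1) n = cellf x φf (k+1) m) :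
    cellf x φf k n = cellf x φf k m :=
  cellf_eq_of_eqv x φf (eqv_of_succ x φf (eqv_of_cellf_eq x φf h))

def Rset (k : ℕ) : Set ℕ := {m | cellf x φf k m = m}

lemma cellf_mem_Rset (k n : ℕ) : cellf x φf k n ∈ Rset x φf k := cellf_idem x φf k n

lemma cellf_zero (n : ℕ) : cellf x φf 0 n = 0 := by
  have : eqv x φf 0 n 0 := fun r hr => absurd hr (by omega)
  exact Nat.le_zero.mp (cellf_min x φf this)

lemma Rset_finite (hb : ∀ j : ℕ, ∃ C, ∀ n, |φf j (x n)| ≤ C) (k : ℕ) :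
    (Rset x φf k).Finite := by
  classical
  choose C hC using hb
  set F : ℕ → (Fin k → ℤ) := fun m r => ⌊(2:ℝ)^k * φf r (x m)⌋ with hF
  have hinj : Set.InjOn F (Rset x φf k) := by
    intro m hm m' hm' hEq
    have heqv : eqv x φf k m m' := by
      intro r hr
      have := congrFun hEq ⟨r, hr⟩
      simpa [F] using this
    have h2 := cellf_eq_of_eqv x φf heqv
    rw [hm, hm'] at h2
    exact h2
  have hp : (0:ℝ) ≤ 2^k := by positivity
  have hsub : F '' (Rset x φf k) ⊆
      Set.univ.pi (fun r : Fin k => Set.Icc ⌊-((2:ℝ)^k * C r)⌋ ⌊(2:ℝ)^k * C r⌋) := by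
    rintro _ ⟨m, _, rfl⟩ r _
    have h1 := abs_le.mp (hC r m)
    constructor
    · apply Int.floor_mono
      have := mul_le_mul_of_nonneg_left h1.1 hp
      linarith [this]
    · apply Int.floor_mono
      exact mul_le_mul_of_nonneg_left h1.2 hp
  exact Set.Finite.of_finite_image
    (Set.Finite.subset (Set.Finite.pi (fun r => Set.finite_Icc _ _)) hsub) hinj

end Core

section Core2
open TopologicalSpace Set

variable {X : Type*} [NormedAddCommGroup X] [NormedSpace ℝ X]
variable (x : ℕ → X) (φf : ℕ → StrongDual ℝ X) (L : BanachLimit)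

def indS (k m : ℕ) : BoundedContinuousFunction ℕ ℝ :=
  bseq (fun n => if cellf x φf k n = m then (1:ℝ) else 0)
    ⟨1, fun n => by by_cases h : cellf x φf k n = m <;> simp [h]⟩

def rho (k m : ℕ) : ℝ := L.toFun (indS x φf k m)

lemma rho_nonneg (k m : ℕ) : 0 ≤ rho x φf L k m :=
  L.pos' _ (fun n => by simp only [indS, bseq_apply]; split <;> norm_num)

variable (hfin : ∀ k, (Rset x φf k).Finite)

def Rfin (k : ℕ) : Finset ℕ := (hfin k).toFinset

lemma mem_Rfin {k m : ℕ} : m ∈ Rfin x φf hfin k ↔ cellf x φf k m = m := by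
  simp [Rfin, Rset]

lemma cellf_mem_Rfin (k n : ℕ) : cellf x φf k n ∈ Rfin x φf hfin k :=
  (mem_Rfin x φf hfin).mpr (cellf_idem x φf k n)

/-- decomposition of a level-`k` cell indicator into its children at level `k+1` -/
lemma indS_children {k m : ℕ} (hm : cellf x φf k m = m) :
    indS x φf k m
      = ∑ m' ∈ (Rfin x φf hfin (k+1)).filter (fun m' => cellf x φf k m' = m),
          indS x φf (k+1) m' := by
  apply BoundedContinuousFunction.ext
  intro n
  rw [BoundedContinuousFunction.coe_sum]
  simp only [Finset.sum_apply]
  by_cases hc : cellf x φf k n = m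
  · have hLHS : indS x φf k m n = 1 := by simp [indS, hc]
    rw [hLHS]
    have hmem : cellf x φf (k+1) n ∈
        (Rfin x φf hfin (k+1)).filter (fun m' => cellf x φf k m' = m) := by
      refine Finset.mem_filter.mpr ⟨cellf_mem_Rfin x φf hfin _ _, ?_⟩
      rw [cellf_succ_eq x φf (cellf_idem x φf (k+1) n), hc]
    rw [Finset.sum_eq_single_of_mem _ hmem]
    · simp [indS]
    · intro m' hm' hne
      have hm'R := (mem_Rfin x φf hfin).mp (Finset.mem_filter.mp hm').1
      have : ¬ (cellf x φf (k+1) n = m') := by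
        intro h; exact hne (by rw [← h])
      simp [indS, this]
  · have hLHS : indS x φf k m n = 0 := by simp [indS, hc]
    rw [hLHS]
    symm
    apply Finset.sum_eq_zero
    intro m' hm'
    obtain ⟨hm'R, hm'p⟩ := Finset.mem_filter.mp hm'
    have : ¬ (cellf x φf (k+1) n = m') := by
      intro h
      apply hc
      rw [← hm'p]
      apply cellf_succ_eq x φf
      rw [h, (mem_Rfin x φf hfin).mp hm'R]
    simp [indS, this]

lemma rho_children {k m : ℕ} (hm : cellf x φf k m = m) :
    rho x φf L k m
      = ∑ m' ∈ (Rfin x φf hfin (k+1)).filter (fun m' => cellf x φf k m' = m),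
          rho x φf L (k+1) m' := by
  rw [rho, indS_children x φf hfin hm, L.map_sum]
  rfl

lemma rho_zero_eq_one : rho x φf L 0 0 = 1 := by
  have : indS x φf 0 0 = (1 : BoundedContinuousFunction ℕ ℝ) := by
    apply BoundedContinuousFunction.ext
    intro n
    simp [indS, cellf_zero x φf n]
  rw [rho, this, L.one']

/-- left endpoint of the level-`k` interval of the cell of `n` -/
def Gf : ℕ → ℕ → ℝ
  | 0, _ => 0
  | (k+1), n => Gf k n +
      ∑ m' ∈ (Rfin x φf hfin (k+1)).filter
          (fun m' => cellf x φf k m' = cellf x φf k n ∧ m' < cellf x φf (k+1) n),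
        rho x φf L (k+1) m'

lemma Gf_congr : ∀ {k n n' : ℕ}, cellf x φf k n = cellf x φf k n' →
    Gf x φf L hfin k n = Gf x φf L hfin k n'
  | 0, _, _, _ => rfl
  | (k+1), n, n', h => by
      have hk : cellf x φf k n = cellf x φf k n' := cellf_succ_eq x φf h
      simp only [Gf]
      rw [Gf_congr hk, hk, h]

def Iset (k n : ℕ) : Set ℝ :=
  Set.Ico (Gf x φf L hfin k n) (Gf x φf L hfin k n + rho x φf L k (cellf x φf k n))

lemma Iset_succ_subset (k n : ℕ) : Iset x φf L hfin (k+1) n ⊆ Iset x φf L hfin k n := by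
  have hρ : ∀ m, 0 ≤ rho x φf L (k+1) m := rho_nonneg x φf L (k+1)
  have h1 : Gf x φf L hfin k n ≤ Gf x φf L hfin (k+1) n := by
    simp only [Gf]
    have : 0 ≤ ∑ m' ∈ (Rfin x φf hfin (k+1)).filter
        (fun m' => cellf x φf k m' = cellf x φf k n ∧ m' < cellf x φf (k+1) n),
        rho x φf L (k+1) m' := Finset.sum_nonneg (fun i _ => hρ i)
    linarith
  have h2 : Gf x φf L hfin (k+1) n + rho x φf L (k+1) (cellf x φf (k+1) n)
      ≤ Gf x φf L hfin k n + rho x φf L k (cellf x φf k n) := by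
    simp only [Gf]
    have hsub : insert (cellf x φf (k+1) n)
        ((Rfin x φf hfin (k+1)).filter
          (fun m' => cellf x φf k m' = cellf x φf k n ∧ m' < cellf x φf (k+1) n))
        ⊆ (Rfin x φf hfin (k+1)).filter (fun m' => cellf x φf k m' = cellf x φf k n) := by
      intro a ha
      rcases Finset.mem_insert.mp ha with rfl | ha
      · exact Finset.mem_filter.mpr ⟨cellf_mem_Rfin x φf hfin _ _,
          cellf_succ_eq x φf (cellf_idem x φf (k+1) n)⟩
      · obtain ⟨h3, h4, _⟩ := Finset.mem_filter.mp ha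
        exact Finset.mem_filter.mpr ⟨h3, h4⟩
    have hnotin : cellf x φf (k+1) n ∉ (Rfin x φf hfin (k+1)).filter
        (fun m' => cellf x φf k m' = cellf x φf k n ∧ m' < cellf x φf (k+1) n) := by
      intro h
      exact absurd (Finset.mem_filter.mp h).2.2 (lt_irrefl _)
    have hins : (∑ m' ∈ (Rfin x φf hfin (k+1)).filter
          (fun m' => cellf x φf k m' = cellf x φf k n ∧ m' < cellf x φf (k+1) n),
          rho x φf L (k+1) m') + rho x φf L (k+1) (cellf x φf (k+1) n)
        = ∑ m' ∈ insert (cellf x φf (k+1) n)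
            ((Rfin x φf hfin (k+1)).filter
              (fun m' => cellf x φf k m' = cellf x φf k n ∧ m' < cellf x φf (k+1) n)),
            rho x φf L (k+1) m' := by
      rw [Finset.sum_insert hnotin, add_comm]
    have hle : ∑ m' ∈ insert (cellf x φf (k+1) n)
          ((Rfin x φf hfin (k+1)).filter
            (fun m' => cellf x φf k m' = cellf x φf k n ∧ m' < cellf x φf (k+1) n)),
          rho x φf L (k+1) m'
        ≤ ∑ m' ∈ (Rfin x φf hfin (k+1)).filter (fun m' => cellf x φf k m' = cellf x φf k n),
            rho x φf L (k+1) m' :=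
      Finset.sum_le_sum_of_subset_of_nonneg hsub (fun i _ _ => hρ i)
    have hdecomp := rho_children x φf L hfin (cellf_idem x φf k n)
    rw [hdecomp]
    linarith [hins, hle]
  intro t ht
  obtain ⟨ht1, ht2⟩ := ht
  exact ⟨le_trans h1 ht1, lt_of_lt_of_le ht2 h2⟩

end Core2

section Core3
open TopologicalSpace Set

variable {X : Type*} [NormedAddCommGroup X] [NormedSpace ℝ X]
variable (x : ℕ → X) (φf : ℕ → StrongDual ℝ X) (L : BanachLimit)
variable (hfin : ∀ k, (Rset x φf k).Finite)

lemma Iset_eq_of_cellf_eq {k n n' : ℕ} (h : cellf x φf k n = cellf x φf k n') :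
    Iset x φf L hfin k n = Iset x φf L hfin k n' := by
  unfold Iset
  rw [Gf_congr x φf L hfin h, h]

lemma Iset_subset_unit (k n : ℕ) : Iset x φf L hfin k n ⊆ Set.Ico (0:ℝ) 1 := by
  induction k with
  | zero =>
      intro t ht
      unfold Iset at ht
      rw [show Gf x φf L hfin 0 n = 0 from rfl, cellf_zero x φf n, rho_zero_eq_one x φf L] at ht
      simpa using ht
  | succ k ih => exact fun t ht => ih (Iset_succ_subset x φf L hfin k n ht)

lemma Gf_succ_rep {k p m' : ℕ} (hp : cellf x φf k p = p) (hm'R : cellf x φf (k+1) m' = m')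
    (hm'p : cellf x φf k m' = p) :
    Gf x φf L hfin (k+1) m' = Gf x φf L hfin k p +
      ∑ m'' ∈ ((Rfin x φf hfin (k+1)).filter (fun a => cellf x φf k a = p)).filter (· < m'),
        rho x φf L (k+1) m'' := by
  show Gf x φf L hfin k m' + _ = _
  rw [Gf_congr x φf L hfin (show cellf x φf k m' = cellf x φf k p by rw [hm'p, hp]),
    Finset.filter_filter]
  congr 1
  apply Finset.sum_congr _ (fun _ _ => rfl)
  apply Finset.filter_congr
  intro a _
  rw [hm'p, hm'R]

lemma tiling (k : ℕ) : ∀ {t : ℝ}, 0 ≤ t → t < 1 →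
    ∃! m, cellf x φf k m = m ∧ t ∈ Iset x φf L hfin k m := by
  induction k with
  | zero =>
      intro t h0 h1
      refine ⟨0, ⟨cellf_zero x φf 0, ?_⟩, ?_⟩
      · unfold Iset
        rw [show Gf x φf L hfin 0 0 = 0 from rfl, cellf_zero x φf 0, rho_zero_eq_one x φf L]
        simpa using ⟨h0, h1⟩
      · rintro m ⟨hm, -⟩
        rw [← hm, cellf_zero x φf m]
  | succ k ih =>
      intro t h0 h1
      obtain ⟨p, ⟨hp, htp⟩, hpu⟩ := ih h0 h1
      set s := (Rfin x φf hfin (k+1)).filter (fun a => cellf x φf k a = p) with hs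
      have hsum : rho x φf L k p = ∑ m' ∈ s, rho x φf L (k+1) m' := rho_children x φf L hfin hp
      have hτ0 : 0 ≤ t - Gf x φf L hfin k p := by
        have := htp.1; linarith
      have hτ1 : t - Gf x φf L hfin k p < ∑ m' ∈ s, rho x φf L (k+1) m' := by
        have := htp.2
        rw [hp] at this
        rw [← hsum]
        linarith
      obtain ⟨c, ⟨hcs, hc1, hc2⟩, hcu⟩ := exists_unique_partial_sum (rho x φf L (k+1)) s
        (t - Gf x φf L hfin k p) (fun i _ => rho_nonneg x φf L (k+1) i) hτ0 hτ1
      have hcR : cellf x φf (k+1) c = c := (mem_Rfin x φf hfin).mp (Finset.mem_filter.mp hcs).1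
      have hcp : cellf x φf k c = p := (Finset.mem_filter.mp hcs).2
      -- characterization of membership
      have hchar : ∀ m', cellf x φf (k+1) m' = m' → cellf x φf k m' = p →
          (t ∈ Iset x φf L hfin (k+1) m' ↔
            ((∑ m'' ∈ s.filter (· < m'), rho x φf L (k+1) m'') ≤ t - Gf x φf L hfin k p ∧
             t - Gf x φf L hfin k p < (∑ m'' ∈ s.filter (· < m'), rho x φf L (k+1) m'')
               + rho x φf L (k+1) m')) := by
        intro m' hm'R hm'p
        unfold Iset
        rw [Gf_succ_rep x φf L hfin hp hm'R hm'p, hm'R, ← hs]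
        constructor
        · intro hmem
          obtain ⟨u1, u2⟩ := hmem
          constructor <;> linarith
        · rintro ⟨u1, u2⟩
          exact ⟨by linarith, by linarith⟩
      refine ⟨c, ⟨hcR, (hchar c hcR hcp).mpr ⟨hc1, hc2⟩⟩, ?_⟩
      rintro m' ⟨hm'R, htm'⟩
      have htk : t ∈ Iset x φf L hfin k m' := Iset_succ_subset x φf L hfin k m' htm'
      have hq : cellf x φf k m' = p := by
        have hqrep : cellf x φf k (cellf x φf k m') = cellf x φf k m' := cellf_idem x φf k m'
        have : t ∈ Iset x φf L hfin k (cellf x φf k m') := by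
          rwa [← Iset_eq_of_cellf_eq x φf L hfin (cellf_idem x φf k m').symm]
        exact hpu (cellf x φf k m') ⟨hqrep, this⟩
      have hm's : m' ∈ s := Finset.mem_filter.mpr ⟨(mem_Rfin x φf hfin).mpr hm'R, hq⟩
      exact hcu m' ⟨hm's, ((hchar m' hm'R hq).mp htm').1, ((hchar m' hm'R hq).mp htm').2⟩

def crep (k : ℕ) (t : ℝ) : ℕ :=
  if h : 0 ≤ t ∧ t < 1 then (tiling x φf L hfin k h.1 h.2).exists.choose else 0

lemma crep_spec (k : ℕ) {t : ℝ} (h0 : 0 ≤ t) (h1 : t < 1) :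
    cellf x φf k (crep x φf L hfin k t) = crep x φf L hfin k t ∧
      t ∈ Iset x φf L hfin k (crep x φf L hfin k t) := by
  unfold crep
  rw [dif_pos ⟨h0, h1⟩]
  exact (tiling x φf L hfin k h0 h1).exists.choose_spec

lemma crep_eq {k : ℕ} {t : ℝ} (h0 : 0 ≤ t) (h1 : t < 1) {m : ℕ}
    (hm : cellf x φf k m = m) (ht : t ∈ Iset x φf L hfin k m) :
    m = crep x φf L hfin k t := by
  obtain ⟨q, hq, hqu⟩ := tiling x φf L hfin k h0 h1
  rw [hqu m ⟨hm, ht⟩, hqu (crep x φf L hfin k t)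
    ⟨(crep_spec x φf L hfin k h0 h1).1, (crep_spec x φf L hfin k h0 h1).2⟩]

lemma crep_succ (k : ℕ) {t : ℝ} (h0 : 0 ≤ t) (h1 : t < 1) :
    cellf x φf k (crep x φf L hfin (k+1) t) = crep x φf L hfin k t := by
  have hspec := crep_spec x φf L hfin (k+1) h0 h1
  have ht : t ∈ Iset x φf L hfin k (cellf x φf k (crep x φf L hfin (k+1) t)) := by
    rw [← Iset_eq_of_cellf_eq x φf L hfin (cellf_idem x φf k (crep x φf L hfin (k+1) t)).symm]
    exact Iset_succ_subset x φf L hfin k _ hspec.2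
  exact crep_eq x φf L hfin h0 h1 (cellf_idem x φf k _) ht

lemma mem_Iset_iff_crep {k m : ℕ} (hm : cellf x φf k m = m) {t : ℝ} :
    t ∈ Iset x φf L hfin k m ↔ (0 ≤ t ∧ t < 1 ∧ crep x φf L hfin k t = m) := by
  constructor
  · intro ht
    have hu := Iset_subset_unit x φf L hfin k m ht
    exact ⟨hu.1, hu.2, (crep_eq x φf L hfin hu.1 hu.2 hm ht).symm⟩
  · rintro ⟨h0, h1, rfl⟩
    exact (crep_spec x φf L hfin k h0 h1).2

end Core3

section Core4
open TopologicalSpace Set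

variable {X : Type*} [NormedAddCommGroup X] [NormedSpace ℝ X]

lemma continuous_dual_weakSpace (φ : StrongDual ℝ X) :
    Continuous fun w : WeakSpace ℝ X => φ ((toWeakSpace ℝ X).symm w) := by
  exact WeakBilin.eval_continuous ((topDualPairing ℝ X).flip) φ

variable (x : ℕ → X) (φf : ℕ → StrongDual ℝ X) (L : BanachLimit)

lemma coordinate_bound {k n m : ℕ} (hcell : cellf x φf k n = cellf x φf k m) {r : ℕ}
    (hr : r < k) : |φf r (x n) - φf r (x m)| ≤ ((2:ℝ)^k)⁻¹ :=
  le_of_lt (dist_lt_of_eqv x φf (eqv_of_cellf_eq x φf hcell) hr)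

lemma closure_coordinate_bound {k n : ℕ} {r : ℕ} (hr : r < k) {w : WeakSpace ℝ X}
    (hw : w ∈ closure ((toWeakSpace ℝ X) '' (x '' {n' | cellf x φf k n' = cellf x φf k n}))) :
    |φf r ((toWeakSpace ℝ X).symm w) - φf r (x n)| ≤ ((2:ℝ)^k)⁻¹ := by
  have hp : (0:ℝ) < 2^k := by positivity
  set z := ⌊(2:ℝ)^k * φf r (x n)⌋ with hz
  set a := (z : ℝ) / 2^k with ha
  have hmem : ∀ v : ℝ, ⌊(2:ℝ)^k * v⌋ = z → v ∈ Set.Icc a (a + ((2:ℝ)^k)⁻¹) := by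
    intro v hv
    have h1 : (z : ℝ) ≤ (2:ℝ)^k * v := by rw [← hv]; exact Int.floor_le _
    have h2 : (2:ℝ)^k * v < (z : ℝ) + 1 := by rw [← hv]; exact Int.lt_floor_add_one _
    constructor
    · rw [ha, div_le_iff₀ hp, mul_comm]; exact h1
    · have h3 : v ≤ ((z:ℝ) + 1) / 2^k := by rw [le_div_iff₀ hp, mul_comm]; linarith
      have h4 : ((z:ℝ)+1)/2^k = a + ((2:ℝ)^k)⁻¹ := by rw [ha]; field_simp
      linarith
  have hIcc : IsClosed (Set.Icc a (a + ((2:ℝ)^k)⁻¹)) := isClosed_Icc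
  have hmaps : Set.MapsTo (fun w : WeakSpace ℝ X => φf r ((toWeakSpace ℝ X).symm w))
      ((toWeakSpace ℝ X) '' (x '' {n' | cellf x φf k n' = cellf x φf k n}))
      (Set.Icc a (a + ((2:ℝ)^k)⁻¹)) := by
    rintro _ ⟨_, ⟨n', hn', rfl⟩, rfl⟩
    simp only [LinearEquiv.symm_apply_apply]
    apply hmem
    have := eqv_of_cellf_eq x φf (hn' : cellf x φf k n' = cellf x φf k n)
    exact this r hr
  have hcl := map_mem_closure (continuous_dual_weakSpace (φf r)) hw hmaps
  rw [hIcc.closure_eq] at hcl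
  have hxn : φf r (x n) ∈ Set.Icc a (a + ((2:ℝ)^k)⁻¹) := hmem _ rfl
  have e1 := hcl.1; have e2 := hcl.2; have e3 := hxn.1; have e4 := hxn.2
  rw [abs_le]
  constructor <;> linarith

end Core4

section CoreMain
open TopologicalSpace Set MeasureTheory

lemma exists_pow_inv_lt {ε : ℝ} (hε : 0 < ε) : ∃ N : ℕ, ((2:ℝ)^N)⁻¹ < ε := by
  obtain ⟨N, hN⟩ := pow_unbounded_of_one_lt (ε⁻¹) (one_lt_two (α := ℝ))
  refine ⟨N, ?_⟩
  have h2 : (0:ℝ) < 2^N := by positivity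
  rwa [inv_lt_comm₀ h2 hε]

lemma pow_inv_antitone {j N : ℕ} (h : j ≤ N) : ((2:ℝ)^N)⁻¹ ≤ ((2:ℝ)^j)⁻¹ :=
  inv_anti₀ (by positivity) (pow_le_pow_right₀ one_le_two h)

variable {X : Type*} [NormedAddCommGroup X] [NormedSpace ℝ X] [CompleteSpace X]

theorem core (x : ℕ → X)
    (hcpt : IsCompact (closure ((toWeakSpace ℝ X) '' Set.range x)))
    (L : BanachLimit)
    (hφb : ∀ φ : StrongDual ℝ X, ∃ C, ∀ n, |φ (x n)| ≤ C) :
    ∃ y ∈ closure (convexHull ℝ (Set.range x)), ∀ φ : StrongDual ℝ X,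
      φ y = L.toFun (bseq (fun n => φ (x n)) (hφb φ)) := by
  classical
  rcases subsingleton_or_nontrivial X with hsub | hnt
  · refine ⟨x 0, subset_closure (subset_convexHull ℝ _ ⟨0, rfl⟩), ?_⟩
    intro φ
    have hb0 : ∃ C, ∀ n : ℕ, |(fun _ : ℕ => φ (x 0)) n| ≤ C := ⟨|φ (x 0)|, fun n => le_rfl⟩
    have : bseq (fun n => φ (x n)) (hφb φ) = bseq (fun _ : ℕ => φ (x 0)) hb0 :=
      BoundedContinuousFunction.ext (fun n => by
        simp only [bseq_apply]; rw [Subsingleton.elim (x n) (x 0)])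
    rw [this, L.map_const]
  -- the span and its closure
  set Ymod := (Submodule.span ℝ (Set.range x)).topologicalClosure with hYmod
  set Y : Set X := (Ymod : Set X) with hYdef
  have hYclosure : Y = closure ((Submodule.span ℝ (Set.range x) : Submodule ℝ X) : Set X) :=
    Submodule.topologicalClosure_coe _
  have hsepY : IsSeparable Y := by
    rw [hYclosure]
    exact ((Set.countable_range x).isSeparable.span).closure
  have hx0Y : x 0 ∈ Y := by
    rw [hYclosure]
    exact subset_closure (Submodule.subset_span ⟨0, rfl⟩)
  -- dense sequence in Y
  haveI : SeparableSpace Y := hsepY.separableSpace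
  haveI : Nonempty Y := ⟨⟨x 0, hx0Y⟩⟩
  set d : ℕ → X := fun j => (TopologicalSpace.denseSeq Y j : X) with hd
  have hdY : ∀ j, d j ∈ Y := fun j => (TopologicalSpace.denseSeq Y j).2
  have hdense : ∀ z ∈ Y, ∀ ε > 0, ∃ j, ‖z - d j‖ < ε := by
    intro z hz ε hε
    obtain ⟨j, hj⟩ := (TopologicalSpace.denseRange_denseSeq Y).exists_dist_lt ⟨z, hz⟩ hε
    refine ⟨j, ?_⟩
    rw [← dist_eq_norm]
    rw [Subtype.dist_eq] at hj
    exact hj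
  -- norming functionals
  have hφex : ∀ j : ℕ, ∃ g : StrongDual ℝ X, ‖g‖ = 1 ∧ g (d j) = ‖d j‖ :=
    fun j => exists_dual_vector' ℝ (d j)
  choose φf hφn hφd using hφex
  -- norming lemma
  have hnorm : ∀ z ∈ Y, ∀ q : ℝ, (∀ j, |φf j z| ≤ q) → ‖z‖ ≤ q := by
    intro z hz q hq
    refine le_of_forall_pos_le_add ?_
    intro ε hε
    obtain ⟨j, hj⟩ := hdense z hz (ε/2) (by linarith)
    have h2 : |φf j (d j) - φf j z| ≤ ‖d j - z‖ := by
      rw [← map_sub]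
      calc |φf j (d j - z)| ≤ ‖φf j‖ * ‖d j - z‖ := (φf j).le_opNorm _
        _ = ‖d j - z‖ := by rw [hφn j, one_mul]
    have h3 : ‖d j - z‖ < ε/2 := by rwa [norm_sub_rev]
    have h4 : ‖z‖ ≤ ‖d j‖ + ‖z - d j‖ := norm_le_norm_add_norm_sub' z (d j)
    have h5 : ‖d j‖ = φf j (d j) := (hφd j).symm
    have h6 := hq j
    have h7 : φf j (d j) ≤ |φf j z| + |φf j (d j) - φf j z| := by
      have := abs_sub_abs_le_abs_sub (φf j (d j)) (φf j z)
      have h8 : φf j (d j) ≤ |φf j (d j)| := le_abs_self _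
      linarith
    linarith
  -- setup for cells
  have hb : ∀ j : ℕ, ∃ C, ∀ n, |φf j (x n)| ≤ C := fun j => hφb (φf j)
  have hfin : ∀ k, (Rset x φf k).Finite := Rset_finite x φf hb
  set W : Set (WeakSpace ℝ X) := closure ((toWeakSpace ℝ X) '' Set.range x) with hW
  have hWcpt : IsCompact W := hcpt
  have hWclosed : IsClosed W := isClosed_closure
  have hκx : ∀ n, (toWeakSpace ℝ X) (x n) ∈ W :=
    fun n => subset_closure (Set.mem_image_of_mem _ ⟨n, rfl⟩)
  -- W lands in the image of Y
  have hWY : ∀ w ∈ W, (toWeakSpace ℝ X).symm w ∈ Y := by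
    have h1 : W ⊆ (toWeakSpace ℝ X) '' Y := by
      rw [hYclosure, Convex.toWeakSpace_closure ℝ (Submodule.span ℝ (Set.range x)).convex]
      exact closure_mono (Set.image_mono Submodule.subset_span)
    intro w hw
    obtain ⟨z, hz, rfl⟩ := h1 hw
    rwa [LinearEquiv.symm_apply_apply]
  -- W lands in the image of the closed convex hull
  have hWcco : ∀ w ∈ W, (toWeakSpace ℝ X).symm w ∈ closure (convexHull ℝ (Set.range x)) := by
    have h1 : W ⊆ (toWeakSpace ℝ X) '' closure (convexHull ℝ (Set.range x)) := by
      rw [Convex.toWeakSpace_closure ℝ (convex_convexHull ℝ _)]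
      exact closure_mono (Set.image_mono (subset_convexHull ℝ _))
    intro w hw
    obtain ⟨z, hz, rfl⟩ := h1 hw
    rwa [LinearEquiv.symm_apply_apply]
  -- uniform bound on W
  have hCex : ∃ C : ℝ, 0 ≤ C ∧ ∀ w ∈ W, ‖(toWeakSpace ℝ X).symm w‖ ≤ C := by
    have hbs : ∃ C', ∀ n : ℕ, ‖((NormedSpace.inclusionInDoubleDualLi ℝ (x n)) :
        StrongDual ℝ (StrongDual ℝ X))‖ ≤ C' := by
      apply banach_steinhaus
      intro φ
      obtain ⟨Cφ, hCφ⟩ := hφb φ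
      refine ⟨Cφ, fun n => ?_⟩
      have happ : (NormedSpace.inclusionInDoubleDualLi ℝ (x n)) φ = φ (x n) := rfl
      rw [happ]
      rw [Real.norm_eq_abs]
      exact hCφ n
    obtain ⟨C', hC'⟩ := hbs
    have hxC : ∀ n, ‖x n‖ ≤ C' := by
      intro n
      have := (NormedSpace.inclusionInDoubleDualLi ℝ (E := X)).norm_map (x n)
      rw [← this]
      exact hC' n
    refine ⟨max C' 0, le_max_right _ _, ?_⟩
    intro w hw
    apply hnorm _ (hWY w hw)
    intro j
    have hmaps : Set.MapsTo (fun w : WeakSpace ℝ X => φf j ((toWeakSpace ℝ X).symm w))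
        ((toWeakSpace ℝ X) '' Set.range x) (Set.Icc (-(max C' 0)) (max C' 0)) := by
      rintro _ ⟨_, ⟨n, rfl⟩, rfl⟩
      simp only [LinearEquiv.symm_apply_apply]
      have h1 : |φf j (x n)| ≤ ‖φf j‖ * ‖x n‖ := (φf j).le_opNorm _
      rw [hφn j, one_mul] at h1
      have h2 : |φf j (x n)| ≤ max C' 0 := le_trans h1 (le_trans (hxC n) (le_max_left _ _))
      exact ⟨(abs_le.mp h2).1, (abs_le.mp h2).2⟩
    have hcl := map_mem_closure (continuous_dual_weakSpace (φf j)) hw hmaps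
    rw [isClosed_Icc.closure_eq] at hcl
    exact abs_le.mpr ⟨hcl.1, hcl.2⟩
  obtain ⟨C, hC0, hCW⟩ := hCex
  -- oscillation claim
  have hclaim : ∀ (φ : StrongDual ℝ X) (ε : ℝ), 0 < ε → ∃ k0 : ℕ,
      ∀ u ∈ W, ∀ v ∈ W,
      (∀ r < k0, |φf r ((toWeakSpace ℝ X).symm u) - φf r ((toWeakSpace ℝ X).symm v)|
        ≤ 2 * ((2:ℝ)^k0)⁻¹) →
      |φ ((toWeakSpace ℝ X).symm u) - φ ((toWeakSpace ℝ X).symm v)| ≤ ε := by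
    intro φ ε hε
    by_contra hcon
    push_neg at hcon
    set F : ℕ → Set (WeakSpace ℝ X × WeakSpace ℝ X) := fun j =>
      {p | p.1 ∈ W} ∩ ({p | p.2 ∈ W} ∩
        ({p | ∀ r < j, |φf r ((toWeakSpace ℝ X).symm p.1) - φf r ((toWeakSpace ℝ X).symm p.2)|
            ≤ 2 * ((2:ℝ)^j)⁻¹} ∩
         {p | ε ≤ |φ ((toWeakSpace ℝ X).symm p.1) - φ ((toWeakSpace ℝ X).symm p.2)|})) with hF
    have hcont : ∀ ψ : StrongDual ℝ X,
        Continuous (fun p : WeakSpace ℝ X × WeakSpace ℝ X =>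
          ψ ((toWeakSpace ℝ X).symm p.1) - ψ ((toWeakSpace ℝ X).symm p.2)) := fun ψ =>
      ((continuous_dual_weakSpace ψ).comp continuous_fst).sub
        ((continuous_dual_weakSpace ψ).comp continuous_snd)
    have hFclosed : ∀ j, IsClosed (F j) := by
      intro j
      refine (hWclosed.preimage continuous_fst).inter
        ((hWclosed.preimage continuous_snd).inter (IsClosed.inter ?_ ?_))
      · have heq : {p : WeakSpace ℝ X × WeakSpace ℝ X |
            ∀ r < j, |φf r ((toWeakSpace ℝ X).symm p.1) - φf r ((toWeakSpace ℝ X).symm p.2)|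
              ≤ 2 * ((2:ℝ)^j)⁻¹}
            = ⋂ r ∈ Set.Iio j, {p : WeakSpace ℝ X × WeakSpace ℝ X |
              |φf r ((toWeakSpace ℝ X).symm p.1) - φf r ((toWeakSpace ℝ X).symm p.2)|
                ≤ 2 * ((2:ℝ)^j)⁻¹} := by
          ext p
          simp [Set.mem_iInter]
        rw [heq]
        exact isClosed_biInter (fun r _ => isClosed_le ((hcont (φf r)).abs) continuous_const)
      · exact isClosed_le continuous_const ((hcont φ).abs)
    have hFanti : ∀ j, F (j+1) ⊆ F j := by
      intro j p hp
      refine ⟨hp.1, hp.2.1, ?_, hp.2.2.2⟩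
      intro r hr
      have hb1 := hp.2.2.1 r (by omega)
      have hmono : ((2:ℝ)^(j+1))⁻¹ ≤ ((2:ℝ)^j)⁻¹ := pow_inv_antitone (by omega)
      linarith
    have hFne : ∀ j, (F j).Nonempty := by
      intro j
      obtain ⟨u, hu, v, hv, hco, hlt⟩ := hcon j
      exact ⟨(u, v), hu, hv, hco, le_of_lt hlt⟩
    have hFcpt : IsCompact (F 0) := (hWcpt.prod hWcpt).of_isClosed_subset (hFclosed 0)
      (fun p hp => Set.mem_prod.mpr ⟨hp.1, hp.2.1⟩)
    obtain ⟨p, hp⟩ := IsCompact.nonempty_iInter_of_sequence_nonempty_isCompact_isClosed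
      F hFanti hFne hFcpt hFclosed
    rw [Set.mem_iInter] at hp
    have hco0 : ∀ r, φf r ((toWeakSpace ℝ X).symm p.1) - φf r ((toWeakSpace ℝ X).symm p.2) = 0 := by
      intro r
      by_contra hne
      have hcpos : 0 < |φf r ((toWeakSpace ℝ X).symm p.1) - φf r ((toWeakSpace ℝ X).symm p.2)| :=
        abs_pos.mpr hne
      obtain ⟨N, hN⟩ := exists_pow_inv_lt (show (0:ℝ) <
        |φf r ((toWeakSpace ℝ X).symm p.1) - φf r ((toWeakSpace ℝ X).symm p.2)|/2 by linarith)
      have hj := (hp (max N (r+1))).2.2.1 r (by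
        have := le_max_right N (r+1); omega)
      have hm : ((2:ℝ)^(max N (r+1)))⁻¹ ≤ ((2:ℝ)^N)⁻¹ := pow_inv_antitone (le_max_left _ _)
      linarith
    have hzY : (toWeakSpace ℝ X).symm p.1 - (toWeakSpace ℝ X).symm p.2 ∈ Y := by
      have h1 : (toWeakSpace ℝ X).symm p.1 ∈ Ymod := hWY _ (hp 0).1
      have h2 : (toWeakSpace ℝ X).symm p.2 ∈ Ymod := hWY _ (hp 0).2.1
      exact Submodule.sub_mem Ymod h1 h2
    have hz0 : ‖(toWeakSpace ℝ X).symm p.1 - (toWeakSpace ℝ X).symm p.2‖ ≤ 0 := by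
      apply hnorm _ hzY
      intro j
      rw [map_sub, hco0 j]
      simp
    have heq : (toWeakSpace ℝ X).symm p.1 = (toWeakSpace ℝ X).symm p.2 := by
      have := norm_nonneg ((toWeakSpace ℝ X).symm p.1 - (toWeakSpace ℝ X).symm p.2)
      have hzz : ‖(toWeakSpace ℝ X).symm p.1 - (toWeakSpace ℝ X).symm p.2‖ = 0 := le_antisymm hz0 this
      rwa [norm_sub_eq_zero_iff] at hzz
    have hεle : ε ≤ |φ ((toWeakSpace ℝ X).symm p.1) - φ ((toWeakSpace ℝ X).symm p.2)| :=
      (hp 0).2.2.2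
    rw [heq] at hεle
    simp only [sub_self, abs_zero] at hεle
    linarith
  -- choice of the branch point
  set WCs : ℕ → ℝ → Set (WeakSpace ℝ X) := fun k t =>
    closure ((toWeakSpace ℝ X) '' (x '' {n | cellf x φf k n = crep x φf L hfin k t})) with hWCs
  have hchoice : ∀ t : ℝ, ∃ w : WeakSpace ℝ X, w ∈ W ∧
      ((0 ≤ t ∧ t < 1) → ∀ k, w ∈ WCs k t) ∧
      (¬(0 ≤ t ∧ t < 1) → w = (toWeakSpace ℝ X) (x 0)) := by
    intro t
    by_cases ht : 0 ≤ t ∧ t < 1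
    · have hWCsub : ∀ k, WCs k t ⊆ W := fun k =>
        closure_mono (Set.image_mono (Set.image_subset_range x _))
      have hanti : ∀ k, WCs (k+1) t ⊆ WCs k t := by
        intro k
        apply closure_mono
        apply Set.image_mono
        apply Set.image_mono
        intro n hn
        show cellf x φf k n = crep x φf L hfin k t
        have h1 : cellf x φf (k+1) n = cellf x φf (k+1) (crep x φf L hfin (k+1) t) := by
          rw [(hn : cellf x φf (k+1) n = crep x φf L hfin (k+1) t),
            (crep_spec x φf L hfin (k+1) ht.1 ht.2).1]
        rw [cellf_succ_eq x φf h1, crep_succ x φf L hfin k ht.1 ht.2]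
      have hne : ∀ k, (WCs k t).Nonempty := by
        intro k
        refine ⟨(toWeakSpace ℝ X) (x (crep x φf L hfin k t)), subset_closure ?_⟩
        exact Set.mem_image_of_mem _ (Set.mem_image_of_mem _ ((crep_spec x φf L hfin k ht.1 ht.2).1))
      have hcl : ∀ k, IsClosed (WCs k t) := fun k => isClosed_closure
      have hcpt0 : IsCompact (WCs 0 t) := hWcpt.of_isClosed_subset (hcl 0) (hWCsub 0)
      obtain ⟨w, hw⟩ := IsCompact.nonempty_iInter_of_sequence_nonempty_isCompact_isClosed
        (fun k => WCs k t) hanti hne hcpt0 hcl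
      rw [Set.mem_iInter] at hw
      exact ⟨w, hWCsub 0 (hw 0), fun _ k => hw k, fun hc => absurd ht hc⟩
    · exact ⟨(toWeakSpace ℝ X) (x 0), hκx 0, fun hc => absurd hc ht, fun _ => rfl⟩
  choose hfun hfunW hfunWC hfunJunk using hchoice
  set hXf : ℝ → X := fun t => (toWeakSpace ℝ X).symm (hfun t) with hXfdef
  have hXfY : ∀ t, hXf t ∈ Y := fun t => hWY _ (hfunW t)
  have hXfC : ∀ t, ‖hXf t‖ ≤ C := fun t => hCW _ (hfunW t)
  have hXfcco : ∀ t, hXf t ∈ closure (convexHull ℝ (Set.range x)) :=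
    fun t => hWcco _ (hfunW t)
  have hXfjunk : ∀ t : ℝ, ¬(0 ≤ t ∧ t < 1) → hXf t = x 0 := by
    intro t ht
    rw [hXfdef]
    simp only
    rw [hfunJunk t ht, LinearEquiv.symm_apply_apply]
  -- key approximation on cells
  have hXfcoord : ∀ t : ℝ, 0 ≤ t → t < 1 → ∀ (k r : ℕ), r < k →
      |φf r (hXf t) - φf r (x (crep x φf L hfin k t))| ≤ ((2:ℝ)^k)⁻¹ := by
    intro t h0 h1 k r hr
    have hrep : cellf x φf k (crep x φf L hfin k t) = crep x φf L hfin k t :=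
      (crep_spec x φf L hfin k h0 h1).1
    have hwmem : hfun t ∈ closure ((toWeakSpace ℝ X) ''
        (x '' {n' | cellf x φf k n' = cellf x φf k (crep x φf L hfin k t)})) := by
      have := hfunWC t ⟨h0, h1⟩ k
      rw [hWCs] at this
      simp only at this
      rwa [hrep]
    exact closure_coordinate_bound x φf hr hwmem
  -- measurability
  letI : MeasurableSpace X := borel X
  haveI : BorelSpace X := ⟨rfl⟩
  have hmeasφ : ∀ j : ℕ, Measurable (fun t => φf j (hXf t)) := by
    intro j
    set s : ℕ → ℝ → ℝ := fun k t =>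
      (∑ m ∈ Rfin x φf hfin k, Set.indicator (Iset x φf L hfin k m) (fun _ => φf j (x m)) t)
      + Set.indicator (Set.Ico (0:ℝ) 1)ᶜ (fun _ => φf j (x 0)) t with hs
    have hsmeas : ∀ k, Measurable (s k) := by
      intro k
      apply Measurable.add
      · apply Finset.measurable_sum
        intro m _
        exact measurable_const.indicator measurableSet_Ico
      · exact measurable_const.indicator measurableSet_Ico.compl
    have hconv : ∀ t, Filter.Tendsto (fun k => s k t) Filter.atTop (nhds (φf j (hXf t))) := by
      intro t
      by_cases ht : 0 ≤ t ∧ t < 1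
      · have hsval : ∀ k, s k t = φf j (x (crep x φf L hfin k t)) := by
          intro k
          rw [hs]
          simp only
          rw [Set.indicator_of_notMem (by simp [ht.1, ht.2] : t ∉ (Set.Ico (0:ℝ) 1)ᶜ), add_zero]
          rw [Finset.sum_eq_single (crep x φf L hfin k t)]
          · rw [Set.indicator_of_mem ((crep_spec x φf L hfin k ht.1 ht.2).2)]
          · intro m hm hne
            apply Set.indicator_of_notMem
            intro hmem
            exact hne ((mem_Iset_iff_crep x φf L hfin
              ((mem_Rfin x φf hfin).mp hm)).mp hmem).2.2.symm
          · intro hnotin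
            exact absurd ((mem_Rfin x φf hfin).mpr
              (crep_spec x φf L hfin k ht.1 ht.2).1) hnotin
        rw [Metric.tendsto_atTop]
        intro δ hδ
        obtain ⟨N, hN⟩ := exists_pow_inv_lt hδ
        refine ⟨max N (j+1), fun k hk => ?_⟩
        rw [hsval k, Real.dist_eq]
        have h1 := hXfcoord t ht.1 ht.2 k j (by
          have h2 := le_max_right N (j+1); omega)
        have h2 : ((2:ℝ)^k)⁻¹ ≤ ((2:ℝ)^N)⁻¹ :=
          pow_inv_antitone (le_trans (le_max_left _ _) hk)
        rw [abs_sub_comm]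
        linarith
      · have hsval : ∀ k, s k t = φf j (x 0) := by
          intro k
          rw [hs]
          simp only
          rw [Set.indicator_of_mem (by simpa using ht)]
          have hz : ∀ m ∈ Rfin x φf hfin k,
              Set.indicator (Iset x φf L hfin k m) (fun _ => φf j (x m)) t = 0 := by
            intro m _
            apply Set.indicator_of_notMem
            intro hmem
            have := Iset_subset_unit x φf L hfin k m hmem
            exact ht ⟨this.1, this.2⟩
          rw [Finset.sum_congr rfl hz, Finset.sum_const, smul_zero, zero_add]
        rw [hXfjunk t ht]
        have : (fun k => s k t) = fun _ => φf j (x 0) := funext hsval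
        rw [this]
        exact tendsto_const_nhds
    exact measurable_of_tendsto_metrizable' Filter.atTop hsmeas
      (tendsto_pi_nhds.mpr hconv)
  have hSM : StronglyMeasurable hXf := by
    rw [stronglyMeasurable_iff_measurable_separable]
    constructor
    · have hfib : ∀ c : X, c ∈ Y → ∀ q : ℝ, MeasurableSet {t : ℝ | ‖hXf t - c‖ ≤ q} := by
        intro c hc q
        have hset : {t : ℝ | ‖hXf t - c‖ ≤ q}
            = ⋂ j : ℕ, {t | |φf j (hXf t) - φf j c| ≤ q} := by
          ext t
          simp only [Set.mem_setOf_eq, Set.mem_iInter]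
          constructor
          · intro h j
            have h1 : |φf j (hXf t - c)| ≤ ‖φf j‖ * ‖hXf t - c‖ := (φf j).le_opNorm _
            rw [hφn j, one_mul, map_sub] at h1
            linarith
          · intro h
            apply hnorm _ (Submodule.sub_mem Ymod (hXfY t) hc)
            intro j
            rw [map_sub]
            exact h j
        rw [hset]
        exact MeasurableSet.iInter (fun j =>
          measurableSet_le ((hmeasφ j).sub measurable_const).abs measurable_const)
      apply measurable_of_isOpen
      intro U hU
      have hpre : hXf ⁻¹' U = ⋃ (j : ℕ) (q : ℚ),
          ⋃ (_ : 0 < (q:ℝ) ∧ Metric.closedBall (d j) (2*(q:ℝ)) ⊆ U),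
            {t | ‖hXf t - d j‖ ≤ (q:ℝ)} := by
        ext t
        simp only [Set.mem_preimage, Set.mem_iUnion, Set.mem_setOf_eq]
        constructor
        · intro htU
          obtain ⟨ε', hε', hball⟩ := Metric.isOpen_iff.mp hU _ htU
          obtain ⟨q, hq1, hq2⟩ := exists_rat_btwn (show (0:ℝ) < ε'/3 by linarith)
          obtain ⟨j, hj⟩ := hdense (hXf t) (hXfY t) q hq1
          refine ⟨j, q, ⟨hq1, ?_⟩, le_of_lt hj⟩
          intro u hu
          apply hball
          rw [Metric.mem_ball]
          rw [Metric.mem_closedBall] at hu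
          have h3 : dist u (hXf t) ≤ dist u (d j) + dist (d j) (hXf t) := dist_triangle _ _ _
          have h4 : dist (d j) (hXf t) = ‖hXf t - d j‖ := by rw [dist_comm, dist_eq_norm]
          linarith
        · rintro ⟨j, q, ⟨hq0, hsub⟩, hle⟩
          apply hsub
          rw [Metric.mem_closedBall, dist_eq_norm]
          linarith
      rw [hpre]
      exact MeasurableSet.iUnion (fun j => MeasurableSet.iUnion (fun q =>
        MeasurableSet.iUnion (fun _ => hfib (d j) (hdY j) q)))
    · exact hsepY.mono (Set.range_subset_iff.mpr hXfY)
  -- the measure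
  set μ : Measure ℝ := (volume : Measure ℝ).restrict (Set.Ico (0:ℝ) 1) with hμ
  haveI : IsProbabilityMeasure μ := by
    constructor
    rw [hμ, Measure.restrict_apply_univ, Real.volume_Ico]
    norm_num
  have hIntb : Integrable hXf μ := by
    refine ⟨hSM.aestronglyMeasurable, ?_⟩
    exact HasFiniteIntegral.of_bounded (C := C) (Filter.Eventually.of_forall hXfC)
  -- the point
  set y : X := ∫ t, hXf t ∂μ with hy
  have hymem : y ∈ closure (convexHull ℝ (Set.range x)) := by
    refine Convex.integral_mem ((convex_convexHull ℝ _).closure) isClosed_closure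
      (Filter.Eventually.of_forall hXfcco) hIntb
  refine ⟨y, hymem, ?_⟩
  intro φ
  have hφint : φ y = ∫ t, φ (hXf t) ∂μ := (ContinuousLinearMap.integral_comp_comm φ hIntb).symm
  apply eq_of_abs_sub_le_all'
  intro ε hε
  obtain ⟨k0, hk0⟩ := hclaim φ (ε/2) (by linarith)
  set A : ℝ := ∑ m ∈ Rfin x φf hfin k0, φ (x m) * rho x φf L k0 m with hA
  have hImeas : ∀ (k m : ℕ), MeasurableSet (Iset x φf L hfin k m) := fun k m => measurableSet_Ico
  have hμI : ∀ m ∈ Rfin x φf hfin k0, (μ (Iset x φf L hfin k0 m)).toReal = rho x φf L k0 m := by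
    intro m hm
    rw [hμ, Measure.restrict_apply (hImeas k0 m)]
    rw [Set.inter_eq_self_of_subset_left (Iset_subset_unit x φf L hfin k0 m)]
    have hIrfl : Iset x φf L hfin k0 m = Set.Ico (Gf x φf L hfin k0 m)
        (Gf x φf L hfin k0 m + rho x φf L k0 (cellf x φf k0 m)) := rfl
    rw [hIrfl, Real.volume_Ico, (mem_Rfin x φf hfin).mp hm, add_sub_cancel_left]
    exact ENNReal.toReal_ofReal (rho_nonneg x φf L k0 m)
  have hgint : Integrable (fun t => ∑ m ∈ Rfin x φf hfin k0,
      Set.indicator (Iset x φf L hfin k0 m) (fun _ => φ (x m)) t) μ :=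
    integrable_finset_sum _ (fun m _ => (integrable_const _).indicator (hImeas k0 m))
  have hi : |(∫ t, φ (hXf t) ∂μ) - A| ≤ ε/2 := by
    have hgval : ∀ t, 0 ≤ t → t < 1 →
        (∑ m ∈ Rfin x φf hfin k0, Set.indicator (Iset x φf L hfin k0 m) (fun _ => φ (x m)) t)
          = φ (x (crep x φf L hfin k0 t)) := by
      intro t h0 h1
      rw [Finset.sum_eq_single (crep x φf L hfin k0 t)]
      · rw [Set.indicator_of_mem ((crep_spec x φf L hfin k0 h0 h1).2)]
      · intro m hm hne
        apply Set.indicator_of_notMem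
        intro hmem
        exact hne ((mem_Iset_iff_crep x φf L hfin ((mem_Rfin x φf hfin).mp hm)).mp hmem).2.2.symm
      · intro hnotin
        exact absurd ((mem_Rfin x φf hfin).mpr (crep_spec x φf L hfin k0 h0 h1).1) hnotin
    have hIg : (∫ t, (∑ m ∈ Rfin x φf hfin k0,
        Set.indicator (Iset x φf L hfin k0 m) (fun _ => φ (x m)) t) ∂μ) = A := by
      rw [integral_finset_sum _ (fun m _ => (integrable_const _).indicator (hImeas k0 m))]
      rw [hA]
      apply Finset.sum_congr rfl
      intro m hm
      rw [integral_indicator_const _ (hImeas k0 m), measureReal_def, hμI m hm, smul_eq_mul, mul_comm]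
    have hφint2 : Integrable (fun t => φ (hXf t)) μ := φ.integrable_comp hIntb
    have hdiff : ∀ t ∈ Set.Ico (0:ℝ) 1, ‖φ (hXf t) - (∑ m ∈ Rfin x φf hfin k0,
        Set.indicator (Iset x φf L hfin k0 m) (fun _ => φ (x m)) t)‖ ≤ ε/2 := by
      intro t ht
      rw [hgval t ht.1 ht.2, Real.norm_eq_abs]
      have hvW := hκx (crep x φf L hfin k0 t)
      have hcoords : ∀ r < k0, |φf r ((toWeakSpace ℝ X).symm (hfun t)) -
          φf r ((toWeakSpace ℝ X).symm ((toWeakSpace ℝ X) (x (crep x φf L hfin k0 t))))|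
          ≤ 2 * ((2:ℝ)^k0)⁻¹ := by
        intro r hr
        rw [LinearEquiv.symm_apply_apply]
        have h2 : (0:ℝ) < ((2:ℝ)^k0)⁻¹ := by positivity
        have h3 : |φf r ((toWeakSpace ℝ X).symm (hfun t)) - φf r (x (crep x φf L hfin k0 t))|
            ≤ ((2:ℝ)^k0)⁻¹ := hXfcoord t ht.1 ht.2 k0 r hr
        linarith
      have hfin2 := hk0 (hfun t) (hfunW t) _ hvW hcoords
      rw [LinearEquiv.symm_apply_apply] at hfin2
      exact hfin2
    have hfinal : ‖∫ t, (φ (hXf t) - (∑ m ∈ Rfin x φf hfin k0,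
        Set.indicator (Iset x φf L hfin k0 m) (fun _ => φ (x m)) t)) ∂μ‖
        ≤ (ε/2) * (μ Set.univ).toReal := by
      apply norm_integral_le_of_norm_le_const
      rw [hμ]
      exact (ae_restrict_iff' measurableSet_Ico).mpr (Filter.Eventually.of_forall hdiff)
    rw [integral_sub hφint2 hgint, hIg] at hfinal
    rw [measure_univ, ENNReal.toReal_one, mul_one] at hfinal
    rwa [Real.norm_eq_abs] at hfinal
  have hii : |L.toFun (bseq (fun n => φ (x n)) (hφb φ)) - A| ≤ ε/2 := by
    have hA2 : A = L.toFun (∑ m ∈ Rfin x φf hfin k0, φ (x m) • indS x φf k0 m) := by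
      rw [L.map_sum, hA]
      apply Finset.sum_congr rfl
      intro m _
      rw [L.map_smul']
      rfl
    have hsumval : ∀ n : ℕ, (∑ m ∈ Rfin x φf hfin k0, φ (x m) • indS x φf k0 m) n
        = φ (x (cellf x φf k0 n)) := by
      intro n
      rw [BoundedContinuousFunction.coe_sum, Finset.sum_apply]
      rw [Finset.sum_eq_single (cellf x φf k0 n)]
      · have hz : (φ (x (cellf x φf k0 n)) • indS x φf k0 (cellf x φf k0 n)) n
            = φ (x (cellf x φf k0 n)) * (indS x φf k0 (cellf x φf k0 n)) n := rfl
        rw [hz]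
        simp [indS]
      · intro m hm hne
        have hz : (φ (x m) • indS x φf k0 m) n = φ (x m) * (indS x φf k0 m) n := rfl
        have hz2 : indS x φf k0 m n = 0 := by
          simp only [indS, bseq_apply]
          exact if_neg (fun h => hne h.symm)
        rw [hz, hz2, mul_zero]
      · intro h
        exact absurd (cellf_mem_Rfin x φf hfin k0 n) h
    have habs : |L.toFun (bseq (fun n => φ (x n)) (hφb φ)
        - ∑ m ∈ Rfin x φf hfin k0, φ (x m) • indS x φf k0 m)| ≤ ε/2 := by
      apply L.abs_le
      intro n
      rw [BoundedContinuousFunction.coe_sub, Pi.sub_apply, bseq_apply, hsumval n]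
      have hvW1 := hκx n
      have hvW2 := hκx (cellf x φf k0 n)
      have hcoords : ∀ r < k0, |φf r ((toWeakSpace ℝ X).symm ((toWeakSpace ℝ X) (x n))) -
          φf r ((toWeakSpace ℝ X).symm ((toWeakSpace ℝ X) (x (cellf x φf k0 n))))|
          ≤ 2 * ((2:ℝ)^k0)⁻¹ := by
        intro r hr
        rw [LinearEquiv.symm_apply_apply, LinearEquiv.symm_apply_apply]
        have h1 := coordinate_bound x φf (cellf_idem x φf k0 n).symm hr
        have h2 : (0:ℝ) < ((2:ℝ)^k0)⁻¹ := by positivity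
        linarith
      have hfin3 := hk0 _ hvW1 _ hvW2 hcoords
      rw [LinearEquiv.symm_apply_apply, LinearEquiv.symm_apply_apply] at hfin3
      exact hfin3
    rw [L.map_sub, ← hA2] at habs
    exact habs
  rw [hφint]
  calc |(∫ t, φ (hXf t) ∂μ) - L.toFun (bseq (fun n => φ (x n)) (hφb φ))|
      = |((∫ t, φ (hXf t) ∂μ) - A) - (L.toFun (bseq (fun n => φ (x n)) (hφb φ)) - A)| := by
        ring_nf
    _ ≤ |(∫ t, φ (hXf t) ∂μ) - A| + |L.toFun (bseq (fun n => φ (x n)) (hφb φ)) - A| :=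
        abs_sub _ _
    _ ≤ ε/2 + ε/2 := add_le_add hi hii
    _ = ε := by ring

end CoreMain


/-- If `K` is relatively weakly compact in a Banach space `X`, `(x n)` a
sequence in `K` and `L` a Banach limit, then the element of `X**` given by
`φ ↦ L (φ (x n))ₙ` is the canonical image of some `y` lying in every norm-closed convex
hull `cco {x i, x (i+1), ...}`. -/
theorem banachLimit_mem_iInter_closedConvexHull {X : Type*} [NormedAddCommGroup X]
    [NormedSpace ℝ X] [CompleteSpace X] (K : Set X)
    (hK : IsCompact (closure ((toWeakSpace ℝ X) '' K)))
    (x : ℕ → X) (hx : ∀ n, x n ∈ K) (L : BanachLimit)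
    (hφb : ∀ φ : StrongDual ℝ X, ∃ C, ∀ n, |φ (x n)| ≤ C) :
    ∃ y : X, (∀ i : ℕ, y ∈ closure (convexHull ℝ {z | ∃ j, i ≤ j ∧ z = x j})) ∧
      ∀ φ : StrongDual ℝ X,
        NormedSpace.inclusionInDoubleDual ℝ X y φ
          = L.toFun (bseq (fun n => φ (x n)) (hφb φ)) := by
  classical
  have hshift : ∀ i : ℕ, ∃ y ∈ closure (convexHull ℝ (Set.range (fun n => x (n + i)))),
      ∀ φ : StrongDual ℝ X, φ y = L.toFun (bseq (fun n => φ (x n)) (hφb φ)) := by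
    intro i
    have hb' : ∀ φ : StrongDual ℝ X, ∃ C, ∀ n, |φ ((fun n => x (n + i)) n)| ≤ C := by
      intro φ; obtain ⟨C, hC⟩ := hφb φ; exact ⟨C, fun n => hC _⟩
    have hcpt' : IsCompact (closure ((toWeakSpace ℝ X) '' Set.range (fun n => x (n + i)))) := by
      apply hK.of_isClosed_subset isClosed_closure
      apply closure_mono
      apply Set.image_mono
      rintro _ ⟨n, rfl⟩
      exact hx (n + i)
    obtain ⟨y, hy1, hy2⟩ := core (fun n => x (n + i)) hcpt' L hb'
    refine ⟨y, hy1, ?_⟩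
    intro φ
    rw [hy2 φ]
    exact L.map_shift_iter (fun n => φ (x n)) i (hφb φ) (hb' φ)
  choose ys hys1 hys2 using hshift
  have hyeq : ∀ i, ys i = ys 0 := by
    intro i
    have hall : ∀ φ : StrongDual ℝ X, φ (ys i) = φ (ys 0) := fun φ => by
      rw [hys2 i φ, hys2 0 φ]
    by_contra hne
    have hne' : ys i - ys 0 ≠ 0 := sub_ne_zero.mpr hne
    obtain ⟨g, hg1, hg2⟩ := exists_dual_vector ℝ (ys i - ys 0) (norm_ne_zero_iff.mpr hne')
    have h4 : g (ys i - ys 0) = 0 := by rw [map_sub, hall g, sub_self]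
    rw [h4] at hg2
    have h5 : ‖ys i - ys 0‖ = 0 := by exact_mod_cast hg2.symm
    exact hne' (norm_eq_zero.mp h5)
  refine ⟨ys 0, ?_, ?_⟩
  · intro i
    have hset : Set.range (fun n => x (n + i)) = {z | ∃ j, i ≤ j ∧ z = x j} := by
      ext z
      constructor
      · rintro ⟨n, rfl⟩; exact ⟨n + i, by omega, rfl⟩
      · rintro ⟨j, hij, rfl⟩
        exact ⟨j - i, by simp only; congr 1; omega⟩
    have := hys1 i
    rw [hset] at this
    rwa [hyeq i] at this
  · intro φ
    have hdual : NormedSpace.inclusionInDoubleDual ℝ X (ys 0) φ = φ (ys 0) :=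
      NormedSpace.dual_def ℝ X (ys 0) φ
    rw [hdual, hys2 0 φ]
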